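/- In the joint graph G^J obtained from G by attaching a leaf copy to every vertex, a vertex a ∈ V is an ancestor of some star triplet of leaf-copy vertices if and only if a is a uw-separator in G for some pair u, w ∈ V. -/

import Mathlib

variable {V : Type*}

/-- A vertex `v` separates `u` and `w`: every path from `u` to `w` contains `v`. -/
def Separates (G : SimpleGraph V) (v u w : V) : Prop :=
  ∀ p : G.Walk u w, p.IsPath → v ∈ p.support

/-- The joint graph `G^J` on `V ⊕ V`: the left copy carries the edges of `G`, and each
left vertex `i` is joined to its right (leaf) copy `i^e`. -/
def jointGraph (G : SimpleGraph V) : SimpleGraph (V ⊕ V) :=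
  SimpleGraph.fromRel (fun a b =>
    (∃ i j : V, a = Sum.inl i ∧ b = Sum.inl j ∧ G.Adj i j) ∨
    (∃ i : V, a = Sum.inl i ∧ b = Sum.inr i))

lemma adj_inr {G : SimpleGraph V} {i : V} {b : V ⊕ V} :
    (jointGraph G).Adj (Sum.inr i) b ↔ b = Sum.inl i := by
  simp [jointGraph, SimpleGraph.fromRel_adj]
  aesop

lemma adj_inl {G : SimpleGraph V} {i : V} {b : V ⊕ V} :
    (jointGraph G).Adj (Sum.inl i) b ↔ (∃ j, b = Sum.inl j ∧ G.Adj i j) ∨ b = Sum.inr i := by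
  constructor
  · rintro ⟨hne, (⟨x,y,hx,hy,hadj⟩|⟨x,hx,hy⟩)|(⟨x,y,hx,hy,hadj⟩|⟨x,hx,hy⟩)⟩
    · cases hx; exact Or.inl ⟨y, hy, hadj⟩
    · cases hx; exact Or.inr hy
    · cases hy; exact Or.inl ⟨x, hx, hadj.symm⟩
    · simp at hy
  · rintro (⟨j, rfl, hadj⟩ | rfl)
    · exact ⟨by simpa using hadj.ne, Or.inl (Or.inl ⟨i, j, rfl, rfl, hadj⟩)⟩
    · exact ⟨by simp, Or.inl (Or.inr ⟨i, rfl, rfl⟩)⟩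

/-- The embedding of `G` into its joint graph. -/
def ι (G : SimpleGraph V) : G →g jointGraph G :=
  ⟨Sum.inl, fun h => adj_inl.mpr (Or.inl ⟨_, rfl, h⟩)⟩

/-- From a path in the joint graph from `inl u` to `inr w`, extract a `G`-walk `u → w`
whose support is reflected in the joint path. -/
lemma extract {G : SimpleGraph V} :
    ∀ {x y : V ⊕ V} (W : (jointGraph G).Walk x y), W.IsPath →
      ∀ u w, x = Sum.inl u → y = Sum.inr w →
      ∃ q : G.Walk u w, ∀ v ∈ q.support, Sum.inl v ∈ W.support := by
  intro x y W
  induction W with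
  | nil => intro _ u w h h'; subst h; simp at h'
  | cons h W' ih =>
    intro hp u w hx hy
    subst hx; subst hy
    rcases adj_inl.mp h with ⟨j, rfl, hadj⟩ | rfl
    · obtain ⟨q, hq⟩ := ih hp.of_cons j w rfl rfl
      refine ⟨SimpleGraph.Walk.cons hadj q, ?_⟩
      intro v hv
      rcases List.mem_cons.mp (by simpa using hv) with rfl | hv'
      · simp
      · simp only [SimpleGraph.Walk.support_cons, List.mem_cons]
        exact Or.inr (hq v hv')
    · -- next vertex is inr u
      by_cases huw : u = w
      · subst huw
        exact ⟨SimpleGraph.Walk.nil, by intro v hv; simp at hv; subst hv; simp⟩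
      · exfalso
        cases W' with
        | nil => exact huw (by simp_all)
        | cons h2 W'' =>
          have hc := adj_inr.mp h2
          subst hc
          have := hp.2
          simp at this

open SimpleGraph in
/-- If `a` separates `u` and `w` in `G`, then `inl a` separates the leaves in `G^J`. -/
lemma sep_joint_of_sep {G : SimpleGraph V} {a u w : V} (h : Separates G a u w)
    (huw : u ≠ w) :
    Separates (jointGraph G) (Sum.inl a) (Sum.inr u) (Sum.inr w) := by
  classical
  intro p hp
  cases p with
  | nil => exact (huw rfl).elim
  | cons h1 p' =>
    have hc := adj_inr.mp h1
    subst hc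
    obtain ⟨q, hq⟩ := extract p' hp.of_cons u w rfl rfl
    have ha : a ∈ q.support := by
      have hb := h q.bypass q.bypass_isPath
      exact q.support_bypass_subset hb
    simp only [Walk.support_cons, List.mem_cons]
    exact Or.inr (hq a ha)

open SimpleGraph in
/-- `inl a` separates `inr a` from any other leaf. -/
lemma sep_joint_self {G : SimpleGraph V} {a w : V} (haw : a ≠ w) :
    Separates (jointGraph G) (Sum.inl a) (Sum.inr a) (Sum.inr w) := by
  intro p hp
  cases p with
  | nil => exact (haw rfl).elim
  | cons h1 p' =>
    have hc := adj_inr.mp h1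
    subst hc
    simp

/-- `Separates` is symmetric in the two endpoints. -/
lemma separates_symm {G : SimpleGraph V} {a u w : V} (h : Separates G a u w) :
    Separates G a w u := by
  intro p hp
  have := h p.reverse hp.reverse
  simpa using this

open SimpleGraph in
/-- Conversely, separation of leaves in `G^J` forces separation in `G`. -/
lemma sep_of_sep_joint {G : SimpleGraph V} {a u w : V}
    (h : Separates (jointGraph G) (Sum.inl a) (Sum.inr u) (Sum.inr w)) (huw : u ≠ w) :
    Separates G a u w := by
  intro q hq
  have h1 : (jointGraph G).Adj (Sum.inr u) (ι G u) := adj_inr.mpr rfl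
  have h2 : (jointGraph G).Adj (ι G w) (Sum.inr w) := adj_inl.mpr (Or.inr rfl)
  have hQmap : (q.map (ι G)).IsPath :=
    Walk.map_isPath_of_injective (fun _ _ => Sum.inl.inj) hq
  have e : (q.map (ι G)).concat h2 = (Walk.cons h2.symm (q.map (ι G)).reverse).reverse := by
    simp [Walk.reverse_cons, Walk.concat_eq_append]
  have hQ1 : ((q.map (ι G)).concat h2).IsPath := by
    rw [e]
    refine (Walk.IsPath.cons hQmap.reverse ?_).reverse
    rw [Walk.support_reverse]
    intro hmem
    simp only [List.mem_reverse, Walk.support_map, List.mem_map] at hmem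
    obtain ⟨v, _, hv⟩ := hmem
    exact absurd hv (by simp [ι])
  have hQ : (Walk.cons h1 ((q.map (ι G)).concat h2)).IsPath := by
    refine Walk.IsPath.cons hQ1 ?_
    intro hmem
    simp only [Walk.support_concat, List.concat_eq_append, List.mem_append,
      List.mem_singleton, Walk.support_map, List.mem_map] at hmem
    rcases hmem with ⟨v, _, hv⟩ | hv
    · exact absurd hv (by simp [ι])
    · exact huw (Sum.inr.inj hv)
  have hmem := h _ hQ
  simp only [Walk.support_cons, Walk.support_concat, List.concat_eq_append,
    List.mem_cons, List.mem_append, List.mem_singleton, Walk.support_map,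
    List.mem_map] at hmem
  rcases hmem with hv | ⟨v, hv, heq⟩ | hv
  · exact absurd hv (by simp)
  · have : v = a := Sum.inl.inj (show Sum.inl v = Sum.inl a from heq)
    subst this; exact hv
  · exact absurd hv (by simp)

/-- A vertex `a` of `G` is the ancestor of some star triplet of leaf-copy vertices in
`G^J` iff `a` is a `uw`-separator in `G` for some pair `u, w`. -/
theorem ancestor_in_jointGraph_iff_separator (G : SimpleGraph V) (hG : G.Connected)
    (a : V) :
    (∃ x y z : V, x ≠ y ∧ x ≠ z ∧ y ≠ z ∧
        Separates (jointGraph G) (Sum.inl a) (Sum.inr x) (Sum.inr y) ∧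
        Separates (jointGraph G) (Sum.inl a) (Sum.inr x) (Sum.inr z) ∧
        Separates (jointGraph G) (Sum.inl a) (Sum.inr y) (Sum.inr z)) ↔
      (∃ u w : V, u ≠ a ∧ w ≠ a ∧ u ≠ w ∧ Separates G a u w) := by
  constructor
  · rintro ⟨x, y, z, hxy, hxz, hyz, s1, s2, s3⟩
    by_cases hx : x = a
    · subst hx
      exact ⟨y, z, fun h => hxy h.symm, fun h => hxz h.symm, hyz,
        sep_of_sep_joint s3 hyz⟩
    · by_cases hy : y = a
      · subst hy
        exact ⟨x, z, hx, fun h => hyz h.symm, hxz, sep_of_sep_joint s2 hxz⟩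
      · exact ⟨x, y, hx, hy, hxy, sep_of_sep_joint s1 hxy⟩
  · rintro ⟨u, w, hua, hwa, huw, hs⟩
    exact ⟨u, w, a, huw, hua, hwa, sep_joint_of_sep hs huw,
      separates_symm (sep_joint_self (fun h => hua h.symm)),
      separates_symm (sep_joint_self (fun h => hwa h.symm))⟩
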